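/- (Oblate spheroid) Let a_1 = a_2 > a_3 > 0 and set g = √(a_1² − a_3²). Then the demagnetizing factors satisfy P_3 = (a_1²/g³) · (g + a_3 · arctan(a_3/g) − a_3 π/2) and P_1 = P_2 = (1 − P_3)/2. -/

import Mathlib

open MeasureTheory Real Set Filter

lemma sqrt_tendsto_atTop' : Filter.Tendsto Real.sqrt atTop atTop := by
  apply Filter.tendsto_atTop_atTop.2
  intro b
  refine ⟨b^2, fun x hx => ?_⟩
  nlinarith [Real.sq_sqrt ((sq_nonneg b).trans hx), Real.sqrt_nonneg x]

lemma sqrtC_tendsto (C : ℝ) : Filter.Tendsto (fun t : ℝ => Real.sqrt (C^2 + t)) atTop atTop :=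
  sqrt_tendsto_atTop'.comp (tendsto_atTop_add_const_left _ _ tendsto_id)

lemma hasDerivAt_sqrtC (C x : ℝ) (h : 0 < C^2 + x) :
    HasDerivAt (fun t : ℝ => Real.sqrt (C^2 + t)) (1/(2*Real.sqrt (C^2+x))) x := by
  have h1 : HasDerivAt (fun t : ℝ => C^2 + t) 1 x := by
    simpa using (hasDerivAt_id x).const_add (C^2)
  exact ((Real.hasDerivAt_sqrt h.ne').comp x h1).congr_deriv (by ring)

lemma int_aux3 (A C g : ℝ) (hA : 0 < A) (hC : 0 < C) (hg : 0 < g) (hg2 : g^2 = A^2 - C^2) :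
    (∫ t in Ioi (0:ℝ), (C^2+t)⁻¹ *
        (A / Real.sqrt (A^2+t) * (A / Real.sqrt (A^2+t)) * (C / Real.sqrt (C^2+t))))
      = -(A^2*C*π/g^3) -
        (-(2*A^2*C/g^2) * C⁻¹ - (2*A^2*C/g^3) * Real.arctan (C/g)) := by
  have key := integral_Ioi_of_hasDerivAt_of_nonneg' (a := (0:ℝ))
    (g := fun t => -(2*A^2*C/g^2) * (Real.sqrt (C^2+t))⁻¹
        - (2*A^2*C/g^3) * Real.arctan (Real.sqrt (C^2+t)/g))
    (g' := fun t => (C^2+t)⁻¹ *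
        (A / Real.sqrt (A^2+t) * (A / Real.sqrt (A^2+t)) * (C / Real.sqrt (C^2+t))))
    (l := -(A^2*C*π/g^3)) ?_ ?_ ?_
  · rw [key]
    norm_num [Real.sqrt_sq hC.le]
  · -- derivative
    intro x hx
    have hx0 : (0:ℝ) ≤ x := hx
    have hCx : 0 < C^2 + x := by positivity
    have hAx : 0 < A^2 + x := by positivity
    have hs := hasDerivAt_sqrtC C x hCx
    set s := Real.sqrt (C^2+x) with hsdef
    have hs0 : 0 < s := Real.sqrt_pos.2 hCx
    have hs2 : s^2 = C^2 + x := Real.sq_sqrt hCx.le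
    have hsA0 : 0 < Real.sqrt (A^2+x) := Real.sqrt_pos.2 hAx
    have hsA2 : (Real.sqrt (A^2+x))^2 = A^2 + x := Real.sq_sqrt hAx.le
    have h1 : HasDerivAt (fun t => -(2*A^2*C/g^2) * (Real.sqrt (C^2+t))⁻¹)
        (-(2*A^2*C/g^2) * (-(1/(2*s)) / s^2)) x := ((hs.inv hs0.ne')).const_mul _
    have h2 : HasDerivAt (fun t => (2*A^2*C/g^3) * Real.arctan (Real.sqrt (C^2+t)/g))
        ((2*A^2*C/g^3) * ((1/(1+(s/g)^2)) * ((1/(2*s))/g))) x := by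
      exact (((Real.hasDerivAt_arctan (s/g)).comp x (hs.div_const g))).const_mul _
    have := h1.sub h2
    refine this.congr_deriv ?_
    symm
    have hden : (1:ℝ)+(s/g)^2 ≠ 0 := by positivity
    have hAs : (Real.sqrt (A^2+x))^2 = s^2 + g^2 := by rw [hsA2, hs2]; linarith [hg2]
    beta_reduce
    set sA := Real.sqrt (A^2+x) with hsAdef
    rw [← hs2]
    field_simp
    linear_combination (-g ^ 2) * hAs
  · intro x hx
    have hx0 : (0:ℝ) ≤ x := le_of_lt hx
    have hCx : 0 < C^2 + x := by positivity
    have hAx : 0 < A^2 + x := by positivity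
    positivity
  · -- limit
    have hts := sqrtC_tendsto C
    have t1 : Filter.Tendsto (fun t : ℝ => -(2*A^2*C/g^2) * (Real.sqrt (C^2+t))⁻¹)
        atTop (nhds (-(2*A^2*C/g^2) * 0)) :=
      ((tendsto_inv_atTop_zero.comp hts)).const_mul _
    have t2 : Filter.Tendsto (fun t : ℝ => (2*A^2*C/g^3) * Real.arctan (Real.sqrt (C^2+t)/g))
        atTop (nhds ((2*A^2*C/g^3) * (π/2))) := by
      have hdiv : Filter.Tendsto (fun t : ℝ => Real.sqrt (C^2+t)/g) atTop atTop :=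
        hts.atTop_div_const hg
      exact ((Real.tendsto_arctan_atTop.mono_right nhdsWithin_le_nhds).comp hdiv).const_mul _
    have := t1.sub t2
    convert this using 2
    ring

lemma tendsto_div_sq (g : ℝ) (hg : 0 < g) :
    Filter.Tendsto (fun u : ℝ => u/(u^2+g^2)) atTop (nhds 0) := by
  have h1 : Filter.Tendsto (fun u : ℝ => u + g^2/u) atTop atTop := by
    apply Filter.Tendsto.atTop_add_zero_eventuallyLE tendsto_id
    filter_upwards [eventually_gt_atTop (0:ℝ)] with u hu
    positivity
  have h2 := h1.inv_tendsto_atTop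
  apply h2.congr'
  filter_upwards [eventually_gt_atTop (0:ℝ)] with u hu
  have h3 : u + g^2/u = (u^2+g^2)/u := by field_simp
  simp only [Pi.inv_apply]
  rw [h3, inv_div]

lemma int_aux1 (A C g : ℝ) (hA : 0 < A) (hC : 0 < C) (hg : 0 < g) (hg2 : g^2 = A^2 - C^2) :
    (∫ t in Ioi (0:ℝ), (A^2+t)⁻¹ *
        (A / Real.sqrt (A^2+t) * (A / Real.sqrt (A^2+t)) * (C / Real.sqrt (C^2+t))))
      = (A^2*C/g^3) * (π/2) -
        ((A^2*C/g^2) * (C/A^2) + (A^2*C/g^3) * Real.arctan (C/g)) := by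
  have key := integral_Ioi_of_hasDerivAt_of_nonneg' (a := (0:ℝ))
    (g := fun t => (A^2*C/g^2) * (Real.sqrt (C^2+t)/(A^2+t))
        + (A^2*C/g^3) * Real.arctan (Real.sqrt (C^2+t)/g))
    (g' := fun t => (A^2+t)⁻¹ *
        (A / Real.sqrt (A^2+t) * (A / Real.sqrt (A^2+t)) * (C / Real.sqrt (C^2+t))))
    (l := (A^2*C/g^3) * (π/2)) ?_ ?_ ?_
  · rw [key]
    norm_num [Real.sqrt_sq hC.le]
  · -- derivative
    intro x hx
    have hx0 : (0:ℝ) ≤ x := hx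
    have hCx : 0 < C^2 + x := by positivity
    have hAx : 0 < A^2 + x := by positivity
    have hs := hasDerivAt_sqrtC C x hCx
    set s := Real.sqrt (C^2+x) with hsdef
    have hs0 : 0 < s := Real.sqrt_pos.2 hCx
    have hs2 : s^2 = C^2 + x := Real.sq_sqrt hCx.le
    have hsA0 : 0 < Real.sqrt (A^2+x) := Real.sqrt_pos.2 hAx
    have hsA2 : (Real.sqrt (A^2+x))^2 = A^2 + x := Real.sq_sqrt hAx.le
    have hA' : HasDerivAt (fun t : ℝ => A^2 + t) 1 x := by
      simpa using (hasDerivAt_id x).const_add (A^2)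
    have h1 : HasDerivAt (fun t => (A^2*C/g^2) * (Real.sqrt (C^2+t)/(A^2+t)))
        ((A^2*C/g^2) * (((1/(2*s))*(A^2+x) - s*1)/(A^2+x)^2)) x :=
      (hs.div hA' hAx.ne').const_mul _
    have h2 : HasDerivAt (fun t => (A^2*C/g^3) * Real.arctan (Real.sqrt (C^2+t)/g))
        ((A^2*C/g^3) * ((1/(1+(s/g)^2)) * ((1/(2*s))/g))) x :=
      (((Real.hasDerivAt_arctan (s/g)).comp x (hs.div_const g))).const_mul _
    have := h1.add h2
    refine this.congr_deriv ?_
    symm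
    have hden : (1:ℝ)+(s/g)^2 ≠ 0 := by positivity
    have hAs : A^2 + x = s^2 + g^2 := by rw [hs2]; linarith [hg2]
    beta_reduce
    set sA := Real.sqrt (A^2+x) with hsAdef
    have hsA2' : sA^2 = s^2 + g^2 := by rw [hsA2]; exact hAs
    rw [hAs]
    field_simp
    linear_combination (-2 * g ^ 2 * (s ^ 2 + g ^ 2)) * hsA2'
  · intro x hx
    have hx0 : (0:ℝ) ≤ x := le_of_lt hx
    have hCx : 0 < C^2 + x := by positivity
    have hAx : 0 < A^2 + x := by positivity
    positivity
  · -- limit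
    have hts := sqrtC_tendsto C
    have t1 : Filter.Tendsto (fun t : ℝ => (A^2*C/g^2) * (Real.sqrt (C^2+t)/(A^2+t)))
        atTop (nhds ((A^2*C/g^2) * 0)) := by
      apply Filter.Tendsto.const_mul
      have := (tendsto_div_sq g hg).comp hts
      apply this.congr'
      filter_upwards [eventually_ge_atTop (0:ℝ)] with t ht
      have hCx : (0:ℝ) ≤ C^2 + t := by positivity
      simp only [Function.comp_apply, Real.sq_sqrt hCx]
      have : C^2 + t + g^2 = A^2 + t := by linarith [hg2]
      rw [this]
    have t2 : Filter.Tendsto (fun t : ℝ => (A^2*C/g^3) * Real.arctan (Real.sqrt (C^2+t)/g))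
        atTop (nhds ((A^2*C/g^3) * (π/2))) := by
      have hdiv : Filter.Tendsto (fun t : ℝ => Real.sqrt (C^2+t)/g) atTop atTop :=
        hts.atTop_div_const hg
      exact ((Real.tendsto_arctan_atTop.mono_right nhdsWithin_le_nhds).comp hdiv).const_mul _
    have := t1.add t2
    convert this using 2
    ring

/-- The `i`-th demagnetizing factor
`P i = (1/2) ∫_0^∞ (a i ^ 2 + t)⁻¹ ∏ j, a j / √(a j ^ 2 + t) dt`. -/
noncomputable def demagFactor (a : Fin 3 → ℝ) (i : Fin 3) : ℝ :=
  (1 / 2) * ∫ t in Ioi (0 : ℝ), (a i ^ 2 + t)⁻¹ * ∏ j, a j / Real.sqrt (a j ^ 2 + t)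

/-- oblate spheroid: if `a 1 = a 2 > a 3 > 0` and `g = √(a 1 ² − a 3 ²)`,
then `P 3 = (a 1 ²/g³)(g + a 3 · arctan (a 3 / g) − a 3 π / 2)` and
`P 1 = P 2 = (1 − P 3)/2`. -/
theorem demagFactor_oblate_spheroid
    (a : Fin 3 → ℝ) (ha3 : 0 < a 2) (heq : a 0 = a 1) (hlt : a 2 < a 0)
    (g : ℝ) (hg : g = Real.sqrt (a 0 ^ 2 - a 2 ^ 2)) :
    demagFactor a 2 =
      (a 0 ^ 2 / g ^ 3) * (g + a 2 * Real.arctan (a 2 / g) - a 2 * π / 2) ∧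
    demagFactor a 0 = (1 - demagFactor a 2) / 2 ∧
    demagFactor a 1 = (1 - demagFactor a 2) / 2 := by
  have hA : 0 < a 0 := ha3.trans hlt
  have hsq : 0 < a 0 ^ 2 - a 2 ^ 2 := by nlinarith
  have hgpos : 0 < g := by rw [hg]; exact Real.sqrt_pos.2 hsq
  have hg2 : g ^ 2 = a 0 ^ 2 - a 2 ^ 2 := by rw [hg]; exact Real.sq_sqrt hsq.le
  have e3 : demagFactor a 2 = (1/2) * (-(a 0 ^2 * a 2 * π / g^3) -
      (-(2 * a 0 ^2 * a 2 / g^2) * (a 2)⁻¹ - (2 * a 0 ^2 * a 2 / g^3) * Real.arctan (a 2 / g))) := by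
    rw [demagFactor]
    simp only [Fin.prod_univ_three, ← heq]
    rw [int_aux3 (a 0) (a 2) g hA ha3 hgpos hg2]
  have e1 : demagFactor a 0 = (1/2) * ((a 0 ^2 * a 2 / g^3) * (π/2) -
      ((a 0 ^2 * a 2 / g^2) * (a 2 / a 0 ^2) + (a 0 ^2 * a 2 / g^3) * Real.arctan (a 2 / g))) := by
    rw [demagFactor]
    simp only [Fin.prod_univ_three, ← heq]
    rw [int_aux1 (a 0) (a 2) g hA ha3 hgpos hg2]
  have e01 : demagFactor a 1 = demagFactor a 0 := by
    simp only [demagFactor, ← heq]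
  refine ⟨?_, ?_, ?_⟩
  · rw [e3]
    field_simp
    ring
  · rw [e1, e3, (by linarith : a 0 ^ 2 = g ^ 2 + a 2 ^ 2)]
    field_simp
    ring
  · rw [e01, e1, e3, (by linarith : a 0 ^ 2 = g ^ 2 + a 2 ^ 2)]
    field_simp
    ring
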